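/- Let n ≥ 1 and let A : Matrix (Fin n) (Fin n) ℍ. Then A is Toeplitz if and only if there exist vectors x y : Fin n → ℍ such that for all r s : Fin n, (A - S * A * Sᵀ) r s = (if s = 0 then x r else 0) + (if r = 0 then y s else 0), where S : Matrix (Fin n) (Fin n) ℍ is the lower shift matrix defined by S r s = if (r : ℕ) = (s : ℕ) + 1 then 1 else 0. -/

import Mathlib

open Matrix

/-- An `n × n` matrix over the real quaternions is Toeplitz if its entries are
constant along diagonals. -/
def IsToeplitz {n : ℕ} (A : Matrix (Fin n) (Fin n) (Quaternion ℝ)) : Prop :=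
  ∀ r s r' s' : Fin n, (r : ℤ) - (s : ℤ) = (r' : ℤ) - (s' : ℤ) → A r s = A r' s'

/-- The lower shift matrix. -/
noncomputable def lowerShift (n : ℕ) : Matrix (Fin n) (Fin n) (Quaternion ℝ) :=
  Matrix.of fun r s => if (r : ℕ) = (s : ℕ) + 1 then 1 else 0

lemma sandwich {n : ℕ} (A : Matrix (Fin n) (Fin n) (Quaternion ℝ)) (r s : Fin n) :
    (lowerShift n * A * (lowerShift n)ᵀ) r s =
      if h : 0 < (r : ℕ) ∧ 0 < (s : ℕ) then
        A ⟨(r : ℕ) - 1, by omega⟩ ⟨(s : ℕ) - 1, by omega⟩ else 0 := by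
  have hrow : ∀ j : Fin n, (lowerShift n * A) r j =
      if h : 0 < (r : ℕ) then A ⟨(r : ℕ) - 1, by omega⟩ j else 0 := by
    intro j
    rw [mul_apply]
    by_cases hr : 0 < (r : ℕ)
    · rw [dif_pos hr]
      rw [Finset.sum_eq_single (⟨(r : ℕ) - 1, by omega⟩ : Fin n)]
      · simp [lowerShift]; omega
      · intro b _ hb
        simp only [lowerShift, Matrix.of_apply]
        rw [if_neg, zero_mul]
        intro h
        apply hb
        exact Fin.ext (by simp only [Fin.val_mk]; omega)
      · simp
    · rw [dif_neg hr]
      apply Finset.sum_eq_zero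
      intro b _
      simp only [lowerShift, Matrix.of_apply]
      rw [if_neg (by omega), zero_mul]
  rw [mul_apply]
  by_cases hr : 0 < (r : ℕ) <;> by_cases hs : 0 < (s : ℕ)
  · rw [dif_pos ⟨hr, hs⟩]
    rw [Finset.sum_eq_single (⟨(s : ℕ) - 1, by omega⟩ : Fin n)]
    · rw [hrow, dif_pos hr]
      simp [lowerShift, transpose_apply]; omega
    · intro b _ hb
      simp only [lowerShift, transpose_apply, Matrix.of_apply]
      rw [if_neg, mul_zero]
      intro h
      apply hb
      exact Fin.ext (by simp only [Fin.val_mk]; omega)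
    · simp
  all_goals
    rw [dif_neg (by omega)]
    apply Finset.sum_eq_zero
    intro b _
  · simp only [lowerShift, transpose_apply, Matrix.of_apply]
    rw [if_neg (by omega), mul_zero]
  · rw [hrow, dif_neg hr, zero_mul]
  · rw [hrow, dif_neg hr, zero_mul]

lemma key_lemma {n : ℕ} (A : Matrix (Fin n) (Fin n) (Quaternion ℝ))
    (hz : ∀ r s : Fin n, ∀ hr : 0 < (r : ℕ), ∀ hs : 0 < (s : ℕ),
      A r s = A ⟨(r : ℕ) - 1, by omega⟩ ⟨(s : ℕ) - 1, by omega⟩) :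
    ∀ k : ℕ, ∀ r s : Fin n, ∀ h1 : (r : ℕ) + k < n, ∀ h2 : (s : ℕ) + k < n,
      A ⟨(r : ℕ) + k, h1⟩ ⟨(s : ℕ) + k, h2⟩ = A r s := by
  intro k
  induction k with
  | zero => intro r s h1 h2; congr 1
  | succ k ih =>
    intro r s h1 h2
    rw [hz ⟨(r : ℕ) + (k+1), h1⟩ ⟨(s : ℕ) + (k+1), h2⟩ (by simp) (by simp)]
    have e1 : (⟨((⟨(r : ℕ) + (k+1), h1⟩ : Fin n) : ℕ) - 1, by omega⟩ : Fin n)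
        = ⟨(r : ℕ) + k, by omega⟩ := Fin.ext (by simp)
    have e2 : (⟨((⟨(s : ℕ) + (k+1), h2⟩ : Fin n) : ℕ) - 1, by omega⟩ : Fin n)
        = ⟨(s : ℕ) + k, by omega⟩ := Fin.ext (by simp)
    rw [e1, e2, ih r s (by omega) (by omega)]

theorem toeplitz_iff_shift_displacement (n : ℕ) (hn : 1 ≤ n)
    (A : Matrix (Fin n) (Fin n) (Quaternion ℝ)) :
    IsToeplitz A ↔ ∃ x y : Fin n → Quaternion ℝ, ∀ r s : Fin n,
      (A - lowerShift n * A * (lowerShift n)ᵀ) r s =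
        (if (s : ℕ) = 0 then x r else 0) + (if (r : ℕ) = 0 then y s else 0) := by
  constructor
  · intro hT
    refine ⟨fun r => A r ⟨0, hn⟩,
      fun s => if (s : ℕ) = 0 then 0 else A ⟨0, hn⟩ s, ?_⟩
    intro r s
    rw [Matrix.sub_apply, sandwich]
    by_cases hr : 0 < (r : ℕ) <;> by_cases hs : 0 < (s : ℕ)
    · rw [dif_pos ⟨hr, hs⟩, if_neg (by omega), if_neg (by omega), add_zero,
        hT r s ⟨(r : ℕ) - 1, by omega⟩ ⟨(s : ℕ) - 1, by omega⟩ (by push_cast; omega),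
        sub_self]
    · have : s = ⟨0, hn⟩ := Fin.ext (by simp only [Fin.val_mk]; omega)
      subst this
      simp [hr.ne']
    · have : r = ⟨0, hn⟩ := Fin.ext (by simp only [Fin.val_mk]; omega)
      subst this
      simp [hs.ne']
    · have hr0 : r = ⟨0, hn⟩ := Fin.ext (by simp only [Fin.val_mk]; omega)
      have hs0 : s = ⟨0, hn⟩ := Fin.ext (by simp only [Fin.val_mk]; omega)
      subst hr0; subst hs0
      simp
  · rintro ⟨x, y, h⟩
    have hz : ∀ r s : Fin n, ∀ hr : 0 < (r : ℕ), ∀ hs : 0 < (s : ℕ),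
        A r s = A ⟨(r : ℕ) - 1, by omega⟩ ⟨(s : ℕ) - 1, by omega⟩ := by
      intro r s hr hs
      have h' := h r s
      rw [Matrix.sub_apply, sandwich, dif_pos ⟨hr, hs⟩, if_neg (by omega), if_neg (by omega),
        add_zero] at h'
      exact sub_eq_zero.mp h'
    intro r s r' s' heq
    have heq' : (r : ℕ) + (s' : ℕ) = (r' : ℕ) + (s : ℕ) := by omega
    rcases le_or_gt (r : ℕ) (r' : ℕ) with hle | hlt
    · obtain ⟨k, hk⟩ : ∃ k, (r' : ℕ) = (r : ℕ) + k := ⟨_, (Nat.add_sub_cancel' hle).symm⟩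
      have hk' : (s' : ℕ) = (s : ℕ) + k := by omega
      have h1 : (r : ℕ) + k < n := by omega
      have h2 : (s : ℕ) + k < n := by omega
      have er : r' = ⟨(r : ℕ) + k, h1⟩ := Fin.ext hk
      have es : s' = ⟨(s : ℕ) + k, h2⟩ := Fin.ext hk'
      rw [er, es, key_lemma A hz k r s h1 h2]
    · obtain ⟨k, hk⟩ : ∃ k, (r : ℕ) = (r' : ℕ) + k := ⟨_, (Nat.add_sub_cancel' hlt.le).symm⟩
      have hk' : (s : ℕ) = (s' : ℕ) + k := by omega
      have h1 : (r' : ℕ) + k < n := by omega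
      have h2 : (s' : ℕ) + k < n := by omega
      have er : r = ⟨(r' : ℕ) + k, h1⟩ := Fin.ext hk
      have es : s = ⟨(s' : ℕ) + k, h2⟩ := Fin.ext hk'
      rw [er, es, key_lemma A hz k r' s' h1 h2]
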